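/- Let G be a finite abelian group and n̄ = (n_a)_{a∈G} a vector of non-negative integers summing to n such that m_a > 0 for all a ∈ G_+. Then E(n̄) ≤ 3^{|G|} · n^{2|G|} · exp(−n · D(ν_{n̄}‖μ_{n̄})). -/

import Mathlib

open scoped Classical

noncomputable section

namespace CLPaper

open Matrix

/-- The matrix `B_n`: rows indexed by `[n]³`, columns by `[n]`;
the row of `(x₁,x₂,x₃)` is `e_{x₁} + e_{x₂} + e_{x₃}`. -/
def B (n : ℕ) : Matrix (Fin n × Fin n × Fin n) (Fin n) ℤ :=
  fun x j => (if x.1 = j then 1 else 0) + (if x.2.1 = j then 1 else 0) +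
    (if x.2.2 = j then 1 else 0)

/-- `det (B_n[K])` for an `n`-element subset `K` of `[n]³` (rows enumerated by a fixed
bijection; the quantities we consider do not depend on this choice), `0` otherwise. -/
def subdet (n : ℕ) (K : Finset (Fin n × Fin n × Fin n)) : ℤ :=
  if h : K.card = n then
    ((B n).submatrix
      (fun i : Fin n => ((K.equivFin.symm (Fin.cast h.symm i)) : Fin n × Fin n × Fin n))
      id).det
  else 0

/-- The cokernel `ℤ^n / (row span of the rows of `B_n` indexed by `K`)`. -/
def cokK (n : ℕ) (K : Finset (Fin n × Fin n × Fin n)) : Type :=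
  (Fin n → ℤ) ⧸ Submodule.span ℤ ((fun x => B n x) '' (K : Set (Fin n × Fin n × Fin n)))

instance (n : ℕ) (K : Finset (Fin n × Fin n × Fin n)) : AddCommGroup (cokK n K) :=
  inferInstanceAs (AddCommGroup ((Fin n → ℤ) ⧸ Submodule.span ℤ _))

/-- The `p`-Sylow subgroup of an abelian group: the subgroup of elements annihilated
by a power of `p`. -/
def sylow (p : ℕ) (A : Type*) [AddCommGroup A] : AddSubgroup A where
  carrier := {x | ∃ k : ℕ, p ^ k • x = 0}
  zero_mem' := ⟨0, by simp⟩
  add_mem' := by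
    rintro x y ⟨k, hk⟩ ⟨l, hl⟩
    refine ⟨k + l, ?_⟩
    rw [smul_add, pow_add, mul_comm, mul_smul, hk, smul_zero, mul_comm, mul_smul, hl,
      smul_zero, add_zero]
  neg_mem' := by
    rintro x ⟨k, hk⟩
    exact ⟨k, by rw [smul_neg, hk, neg_zero]⟩

/-- Number of surjective homomorphisms from `A` to `G`. -/
def numSur (A G : Type*) [AddCommGroup A] [AddCommGroup G] : ℕ :=
  Nat.card {f : A →+ G // Function.Surjective f}

variable {G : Type*} [AddCommGroup G] [Fintype G]

/-- The submatrix `B_{n,q}` of `B_n` consisting of the rows indexed by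
`I_q = {(x₁,x₂,x₃) : q_{x₁} + q_{x₂} + q_{x₃} = 0}`. -/
def Bq (n : ℕ) (q : Fin n → G) :
    Matrix {x : Fin n × Fin n × Fin n // q x.1 + q x.2.1 + q x.2.2 = 0} (Fin n) ℤ :=
  fun x j => B n x.1 j

/-- The Gram matrix `B_{n,q}ᵀ B_{n,q}`. -/
def gram (n : ℕ) (q : Fin n → G) : Matrix (Fin n) (Fin n) ℤ :=
  (Bq n q)ᵀ * Bq n q

/-- `n_a(q) = #{i : q_i = a}`. -/
def cnt {n : ℕ} (q : Fin n → G) (a : G) : ℕ :=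
  (Finset.univ.filter (fun i => q i = a)).card

/-- `m_a = ∑_b n_b n_{-a-b}` associated to a counts vector `n̄ : G → ℕ`. -/
def mOf (nbar : G → ℕ) (a : G) : ℕ :=
  ∑ b : G, nbar b * nbar (-a - b)

/-- The matrix `M` indexed by `G₊ = {a : n_a > 0}`, with
`M(a,a) = 2 n_a n_{-2a} + m_a` and `M(a,b) = 2 √(n_a n_b) n_{-a-b}` for `a ≠ b`. -/
def Mmat (nbar : G → ℕ) :
    Matrix {a : G // 0 < nbar a} {a : G // 0 < nbar a} ℝ :=
  fun a b =>
    if (a : G) = (b : G) then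
      2 * (nbar (a : G) : ℝ) * (nbar (-(2 • (a : G))) : ℝ) + (mOf nbar (a : G) : ℝ)
    else
      2 * Real.sqrt ((nbar (a : G) : ℝ) * (nbar (b : G) : ℝ)) * (nbar (-(a : G) - b) : ℝ)

/-- The set `S(n̄)` of vectors `q ∈ G^n` with the prescribed counts. -/
def Sset (n : ℕ) (nbar : G → ℕ) : Finset (Fin n → G) :=
  Finset.univ.filter (fun q => ∀ a : G, cnt q a = nbar a)

/-- `E(n̄) = ∑_{q ∈ S(n̄)} det(B_{n,q}ᵀ B_{n,q}) / (3^{n+1} n^{2n})`. -/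
def Eval (n : ℕ) (nbar : G → ℕ) : ℝ :=
  (∑ q ∈ Sset n nbar, ((gram n q).det : ℝ)) / ((3 : ℝ) ^ (n + 1) * (n : ℝ) ^ (2 * n))

/-- Kullback–Leibler divergence of two probability vectors on `G` (natural log;
terms with `ν a = 0` contribute `0`). -/
def klDiv (ν μ : G → ℝ) : ℝ :=
  ∑ a : G, if ν a = 0 then 0 else ν a * Real.log (ν a / μ a)

/-- `ν_{n̄}(a) = n_a / n`. -/
def nuOf (n : ℕ) (nbar : G → ℕ) : G → ℝ := fun a => (nbar a : ℝ) / n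

/-- `μ_{n̄}(a) = m_a / n²`. -/
def muOf (n : ℕ) (nbar : G → ℕ) : G → ℝ := fun a => (mOf nbar a : ℝ) / (n : ℝ) ^ 2

/-- `t_n = 2C √(|G| n log n)`. -/
def tSeq (G : Type*) [Fintype G] (C : ℝ) (n : ℕ) : ℝ :=
  2 * C * Real.sqrt ((Fintype.card G) * n * Real.log n)

/-- `r_n = 4C |G| log n`. -/
def rSeq (G : Type*) [Fintype G] (C : ℝ) (n : ℕ) : ℝ :=
  4 * C * (Fintype.card G) * Real.log n

/-- `n̄ ∈ D_n`: the counts sum to `n` and the support generates `G`. -/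
def memD (n : ℕ) (nbar : G → ℕ) : Prop :=
  (∑ a : G, nbar a = n) ∧ AddSubgroup.closure {a : G | 0 < nbar a} = ⊤

/-- `n̄ ∈ D_n'`: moreover `m_a > 0` for all `a ∈ G₊`. -/
def memD' (n : ℕ) (nbar : G → ℕ) : Prop :=
  memD n nbar ∧ ∀ a : G, 0 < nbar a → 0 < mOf nbar a

/-- `u_H(g) = 1/|H|` for `g ∈ H` and `0` otherwise. -/
def uH (H : AddSubgroup G) : G → ℝ :=
  fun g => if g ∈ H then (Nat.card H : ℝ)⁻¹ else 0

/-- `n̄ ∈ B(n,H)`. -/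
def memB (C : ℝ) (n : ℕ) (H : AddSubgroup G) (nbar : G → ℕ) : Prop :=
  memD' n nbar ∧ (∀ a : G, |(nbar a : ℝ) - n * uH H a| ≤ tSeq G C n) ∧
    (∑ a ∈ Finset.univ.filter (fun a : G => a ∉ H), (nbar a : ℝ)) ≤ rSeq G C n


section AuxProofs
set_option linter.unusedSectionVars false

lemma cnt_sum (n : ℕ) (q : Fin n → G) (c : G) :
    ∑ z : Fin n, (if q z = c then (1:ℤ) else 0) = (cnt q c : ℤ) := by
  simp [cnt, Finset.sum_boole]

lemma cnt_sumR (n : ℕ) (q : Fin n → G) (c : G) :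
    ∑ z : Fin n, (if q z = c then (1:ℝ) else 0) = (cnt q c : ℝ) := by
  simp [cnt, Finset.sum_boole]

lemma sum_comp (n : ℕ) (q : Fin n → G) {M : Type*} [AddCommMonoid M] (f : G → M) :
    ∑ j : Fin n, f (q j) = ∑ a : G, cnt q a • f a := by
  rw [← Finset.sum_fiberwise_of_maps_to (g := q) (t := Finset.univ)
    (fun i _ => Finset.mem_univ _) (fun j => f (q j))]
  refine Finset.sum_congr rfl fun a _ => ?_
  rw [Finset.sum_congr rfl (fun j hj => by rw [(Finset.mem_filter.mp hj).2]),
    Finset.sum_const]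
  rfl

lemma prod_comp (n : ℕ) (q : Fin n → G) {M : Type*} [CommMonoid M] (f : G → M) :
    ∏ j : Fin n, f (q j) = ∏ a : G, f a ^ cnt q a := by
  rw [← Finset.prod_fiberwise_of_maps_to (g := q) (t := Finset.univ)
    (fun i _ => Finset.mem_univ _) (fun j => f (q j))]
  refine Finset.prod_congr rfl fun a _ => ?_
  rw [Finset.prod_congr rfl (fun j hj => by rw [(Finset.mem_filter.mp hj).2]),
    Finset.prod_const]
  rfl

lemma pair_sum (n : ℕ) (q : Fin n → G) (s : G) :
    ∑ y : Fin n, ∑ z : Fin n, (if q y + q z = s then (1:ℤ) else 0)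
      = (mOf (cnt q) (-s) : ℤ) := by
  have h1 : ∀ y, ∑ z : Fin n, (if q y + q z = s then (1:ℤ) else 0)
      = (cnt q (s - q y) : ℤ) := by
    intro y
    rw [← cnt_sum n q (s - q y)]
    refine Finset.sum_congr rfl fun z _ => ?_
    congr 1
    simp only [eq_iff_iff]
    constructor
    · intro h; rw [← h]; abel
    · intro h; rw [h]; abel
  simp only [h1]
  rw [sum_comp n q (fun b => (cnt q (s - b) : ℤ))]
  rw [mOf]
  push_cast
  refine Finset.sum_congr rfl fun b _ => ?_
  rw [nsmul_eq_mul]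
  congr 2
  abel

lemma gram_apply (n : ℕ) (q : Fin n → G) (j k : Fin n) :
    gram n q j k = 6 * (cnt q (-(q j) - q k) : ℤ)
      + (if j = k then 3 * (mOf (cnt q) (q j) : ℤ) else 0) := by
  have h0 : gram n q j k
      = ∑ x : Fin n × Fin n × Fin n,
          (if q x.1 + q x.2.1 + q x.2.2 = 0 then B n x j * B n x k else 0) := by
    rw [gram, Matrix.mul_apply, ← Finset.sum_filter,
      Finset.sum_subtype (p := fun x : Fin n × Fin n × Fin n => q x.1 + q x.2.1 + q x.2.2 = 0)
        (Finset.univ.filter fun x : Fin n × Fin n × Fin n => q x.1 + q x.2.1 + q x.2.2 = 0)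
        (fun x => by simp) (fun x => B n x j * B n x k)]
    rfl
  rw [h0]
  simp only [Fintype.sum_prod_type]
  have expand : ∀ x1 x2 x3 : Fin n,
      (if q x1 + q x2 + q x3 = 0 then B n (x1, x2, x3) j * B n (x1, x2, x3) k else 0)
      = (if x1 = j then (if x1 = k then (if q x1 + q x2 + q x3 = 0 then (1:ℤ) else 0) else 0) else 0)
      + (if x1 = j then (if x2 = k then (if q x1 + q x2 + q x3 = 0 then (1:ℤ) else 0) else 0) else 0)
      + (if x1 = j then (if x3 = k then (if q x1 + q x2 + q x3 = 0 then (1:ℤ) else 0) else 0) else 0)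
      + (if x1 = k then (if x2 = j then (if q x1 + q x2 + q x3 = 0 then (1:ℤ) else 0) else 0) else 0)
      + (if x2 = j then (if x2 = k then (if q x1 + q x2 + q x3 = 0 then (1:ℤ) else 0) else 0) else 0)
      + (if x2 = j then (if x3 = k then (if q x1 + q x2 + q x3 = 0 then (1:ℤ) else 0) else 0) else 0)
      + (if x1 = k then (if x3 = j then (if q x1 + q x2 + q x3 = 0 then (1:ℤ) else 0) else 0) else 0)
      + (if x2 = k then (if x3 = j then (if q x1 + q x2 + q x3 = 0 then (1:ℤ) else 0) else 0) else 0)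
      + (if x3 = j then (if x3 = k then (if q x1 + q x2 + q x3 = 0 then (1:ℤ) else 0) else 0) else 0) := by
    intro x1 x2 x3
    by_cases h : q x1 + q x2 + q x3 = 0
    · simp only [if_pos h, B]; split_ifs <;> ring
    · simp [if_neg h]
  simp only [expand, Finset.sum_add_distrib, Finset.sum_ite_irrel, Finset.sum_const_zero,
    Finset.sum_ite_eq', Finset.mem_univ, if_true]
  have e1 : (∑ z : Fin n, if q j + q k + q z = 0 then (1:ℤ) else 0)
      = (cnt q (-(q j) - q k) : ℤ) := by
    rw [← cnt_sum n q (-(q j) - q k)]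
    refine Finset.sum_congr rfl fun z _ => if_congr ?_ rfl rfl
    constructor
    · intro h; rw [← sub_eq_zero, ← h]; abel
    · intro h; rw [h]; abel
  have e2 : (∑ z : Fin n, if q j + q z + q k = 0 then (1:ℤ) else 0)
      = (cnt q (-(q j) - q k) : ℤ) := by
    rw [← cnt_sum n q (-(q j) - q k)]
    refine Finset.sum_congr rfl fun z _ => if_congr ?_ rfl rfl
    constructor
    · intro h; rw [← sub_eq_zero, ← h]; abel
    · intro h; rw [h]; abel
  have e3 : (∑ z : Fin n, if q k + q j + q z = 0 then (1:ℤ) else 0)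
      = (cnt q (-(q j) - q k) : ℤ) := by
    rw [← cnt_sum n q (-(q j) - q k)]
    refine Finset.sum_congr rfl fun z _ => if_congr ?_ rfl rfl
    constructor
    · intro h; rw [← sub_eq_zero, ← h]; abel
    · intro h; rw [h]; abel
  have e4 : (∑ z : Fin n, if q z + q j + q k = 0 then (1:ℤ) else 0)
      = (cnt q (-(q j) - q k) : ℤ) := by
    rw [← cnt_sum n q (-(q j) - q k)]
    refine Finset.sum_congr rfl fun z _ => if_congr ?_ rfl rfl
    constructor
    · intro h; rw [← sub_eq_zero, ← h]; abel
    · intro h; rw [h]; abel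
  have e5 : (∑ z : Fin n, if q k + q z + q j = 0 then (1:ℤ) else 0)
      = (cnt q (-(q j) - q k) : ℤ) := by
    rw [← cnt_sum n q (-(q j) - q k)]
    refine Finset.sum_congr rfl fun z _ => if_congr ?_ rfl rfl
    constructor
    · intro h; rw [← sub_eq_zero, ← h]; abel
    · intro h; rw [h]; abel
  have e6 : (∑ z : Fin n, if q z + q k + q j = 0 then (1:ℤ) else 0)
      = (cnt q (-(q j) - q k) : ℤ) := by
    rw [← cnt_sum n q (-(q j) - q k)]
    refine Finset.sum_congr rfl fun z _ => if_congr ?_ rfl rfl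
    constructor
    · intro h; rw [← sub_eq_zero, ← h]; abel
    · intro h; rw [h]; abel
  have hp := pair_sum n q (-(q j))
  rw [neg_neg] at hp
  have p1 : (∑ y : Fin n, ∑ z : Fin n, if q j + q y + q z = 0 then (1:ℤ) else 0)
      = (mOf (cnt q) (q j) : ℤ) := by
    rw [← hp]
    refine Finset.sum_congr rfl fun y _ => Finset.sum_congr rfl fun z _ => if_congr ?_ rfl rfl
    constructor
    · intro h; rw [← sub_eq_zero, ← h]; abel
    · intro h; rw [← sub_eq_zero] at h; rw [← h]; abel
  have p2 : (∑ y : Fin n, ∑ z : Fin n, if q y + q j + q z = 0 then (1:ℤ) else 0)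
      = (mOf (cnt q) (q j) : ℤ) := by
    rw [← hp]
    refine Finset.sum_congr rfl fun y _ => Finset.sum_congr rfl fun z _ => if_congr ?_ rfl rfl
    constructor
    · intro h; rw [← sub_eq_zero, ← h]; abel
    · intro h; rw [← sub_eq_zero] at h; rw [← h]; abel
  have p3 : (∑ y : Fin n, ∑ z : Fin n, if q y + q z + q j = 0 then (1:ℤ) else 0)
      = (mOf (cnt q) (q j) : ℤ) := by
    rw [← hp]
    refine Finset.sum_congr rfl fun y _ => Finset.sum_congr rfl fun z _ => if_congr ?_ rfl rfl
    constructor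
    · intro h; rw [← sub_eq_zero, ← h]; abel
    · intro h; rw [← sub_eq_zero] at h; rw [← h]; abel
  rw [e1, e2, e3, e4, e5, e6, p1, p2, p3]
  by_cases hjk : j = k <;> simp [hjk] <;> ring

lemma cnt_pos_self (n : ℕ) (q : Fin n → G) (j : Fin n) : 0 < cnt q (q j) :=
  Finset.card_pos.mpr ⟨j, by simp [cnt]⟩

lemma sum_cnt (n : ℕ) (q : Fin n → G) : ∑ a : G, cnt q a = n := by
  have h := sum_comp n q (fun _ => (1 : ℕ))
  simpa using h.symm

lemma cnt_le (n : ℕ) (q : Fin n → G) (a : G) : cnt q a ≤ n := by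
  have := Finset.card_filter_le (Finset.univ : Finset (Fin n)) (fun i => q i = a)
  simpa [cnt] using this

lemma cnt_le_mOf (n : ℕ) (q : Fin n → G) (a b : G) (hb : 0 < cnt q b) :
    cnt q (-a - b) ≤ mOf (cnt q) a := by
  have h1 : cnt q (-a - b) * cnt q (-a - (-a - b)) ≤ mOf (cnt q) a := by
    exact Finset.single_le_sum (f := fun c => cnt q c * cnt q (-a - c))
      (fun _ _ => Nat.zero_le _) (Finset.mem_univ (-a - b))
  have h2 : -a - (-a - b) = b := by abel
  rw [h2] at h1
  calc cnt q (-a - b) ≤ cnt q (-a - b) * cnt q b := Nat.le_mul_of_pos_right _ hb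
    _ ≤ mOf (cnt q) a := h1

lemma det_gram_le (n : ℕ) (hn : 0 < n) (q : Fin n → G)
    (hm : ∀ a : G, 0 < cnt q a → 0 < mOf (cnt q) a) :
    ((gram n q).det : ℝ) ≤ 3 ^ n * (∏ j, (mOf (cnt q) (q j) : ℝ)) *
      (3 ^ Fintype.card G * (n : ℝ) ^ (2 * Fintype.card G)) := by
  classical
  have hqmem : ∀ j, 0 < cnt q (q j) := cnt_pos_self n q
  have hmj : ∀ j, (0:ℝ) < (mOf (cnt q) (q j) : ℝ) := fun j => by
    exact_mod_cast hm _ (hqmem j)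
  set σ := {a : G // 0 < cnt q a} with hσ
  let P : Matrix (Fin n) σ ℝ := fun j a => if q j = (a : G) then 1 else 0
  let Nt : Matrix σ σ ℝ := fun a b => (cnt q (-(a : G) - (b : G)) : ℝ)
  let Dd : Matrix (Fin n) (Fin n) ℝ := Matrix.diagonal (fun j => 3 * (mOf (cnt q) (q j) : ℝ))
  let Ei : Matrix (Fin n) (Fin n) ℝ := Matrix.diagonal (fun j => (3 * (mOf (cnt q) (q j) : ℝ))⁻¹)
  have hcol : ∀ (j : Fin n) (f : σ → ℝ),
      (∑ a : σ, (if q j = (a : G) then (1:ℝ) else 0) * f a) = f ⟨q j, hqmem j⟩ := by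
    intro j f
    have hpt : ∀ a : σ, (if q j = (a : G) then (1:ℝ) else 0) * f a
        = if a = ⟨q j, hqmem j⟩ then f a else 0 := by
      intro a
      by_cases h : a = ⟨q j, hqmem j⟩
      · subst h; simp
      · rw [if_neg h, if_neg, zero_mul]
        intro hq; exact h (Subtype.ext hq.symm)
    simp only [hpt]
    exact (Finset.sum_eq_single (⟨q j, hqmem j⟩ : σ) (fun b _ hb => if_neg hb)
      (fun h => absurd (Finset.mem_univ _) h)).trans (if_pos rfl)
  have hPNP : ∀ j k, (P * Nt * Pᵀ) j k = (cnt q (-(q j) - q k) : ℝ) := by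
    intro j k
    have h1 : ∀ b : σ, (P * Nt) j b = Nt ⟨q j, hqmem j⟩ b := by
      intro b; rw [Matrix.mul_apply]; exact hcol j (fun a => Nt a b)
    rw [Matrix.mul_apply]
    simp only [Matrix.transpose_apply, h1]
    rw [Finset.sum_congr rfl (fun b _ => mul_comm (Nt ⟨q j, hqmem j⟩ b) (P k b))]
    exact hcol k _
  have hA : (gram n q).map (fun z : ℤ => (z : ℝ)) = Dd + (6:ℝ) • (P * Nt * Pᵀ) := by
    ext j k
    rw [Matrix.map_apply, gram_apply]
    simp only [Matrix.add_apply, Matrix.smul_apply, hPNP, Dd, Matrix.diagonal_apply,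
      smul_eq_mul]
    by_cases hjk : j = k
    · subst hjk; push_cast; ring
    · simp only [if_neg hjk]; push_cast; ring
  have hDE : Dd * Ei = 1 := by
    rw [Matrix.diagonal_mul_diagonal]
    have : (fun j => (3 * (mOf (cnt q) (q j) : ℝ)) * (3 * (mOf (cnt q) (q j) : ℝ))⁻¹)
        = fun _ => (1:ℝ) := by
      funext j; exact mul_inv_cancel₀ (by have := hmj j; positivity)
    rw [this, Matrix.diagonal_one]
  have hfact : (gram n q).map (fun z : ℤ => (z : ℝ))
      = Dd * (1 + Ei * ((6:ℝ) • (P * Nt * Pᵀ))) := by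
    rw [mul_add, mul_one, ← Matrix.mul_assoc, hDE, one_mul, hA]
  have hcast : ((gram n q).det : ℝ) = ((gram n q).map (fun z : ℤ => (z:ℝ))).det := by
    rw [show ((gram n q).map (fun z : ℤ => (z:ℝ)))
        = (Int.castRingHom ℝ).mapMatrix (gram n q) from rfl, ← RingHom.map_det]
    rfl
  set U : Matrix (Fin n) σ ℝ := Ei * P * ((6:ℝ) • Nt) with hU
  have hUV : Ei * ((6:ℝ) • (P * Nt * Pᵀ)) = U * Pᵀ := by
    simp only [hU, Matrix.mul_smul, Matrix.smul_mul, Matrix.mul_assoc]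
  set W : Matrix σ σ ℝ := 1 + Pᵀ * U with hW
  have hdet : ((gram n q).det : ℝ) = (∏ j, (3 * (mOf (cnt q) (q j) : ℝ))) * W.det := by
    rw [hcast, hfact, Matrix.det_mul, hUV, Matrix.det_one_add_mul_comm, Matrix.det_diagonal,
      hW]
  have hUentry : ∀ (j : Fin n) (b : σ), U j b
      = (3 * (mOf (cnt q) (q j) : ℝ))⁻¹ * (6 * Nt ⟨q j, hqmem j⟩ b) := by
    intro j b
    rw [hU, Matrix.mul_apply]
    have hterm : ∀ c : σ, (Ei * P) j c * ((6:ℝ) • Nt) c b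
        = (if q j = (c:G) then (1:ℝ) else 0)
          * ((3 * (mOf (cnt q) (q j) : ℝ))⁻¹ * (6 * Nt c b)) := by
      intro c
      rw [Matrix.smul_apply, smul_eq_mul,
        show (Ei * P) j c = (3 * (mOf (cnt q) (q j) : ℝ))⁻¹ * P j c from by
          rw [Matrix.diagonal_mul]]
      show (3 * (mOf (cnt q) (q j) : ℝ))⁻¹ * (if q j = (c:G) then (1:ℝ) else 0) * (6 * Nt c b) = _
      ring
    rw [Finset.sum_congr rfl (fun c _ => hterm c)]
    exact hcol j _
  have hPU : ∀ a b : σ, (Pᵀ * U) a b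
      = ∑ j, (if q j = (a:G) then (1:ℝ) else 0)
          * ((3 * (mOf (cnt q) (q j) : ℝ))⁻¹ * (6 * Nt ⟨q j, hqmem j⟩ b)) := by
    intro a b
    rw [Matrix.mul_apply]
    exact Finset.sum_congr rfl fun j _ => by rw [Matrix.transpose_apply, hUentry]
  have htermbd : ∀ (a b : σ) (j : Fin n),
      (0 ≤ (if q j = (a:G) then (1:ℝ) else 0)
          * ((3 * (mOf (cnt q) (q j) : ℝ))⁻¹ * (6 * Nt ⟨q j, hqmem j⟩ b)))
      ∧ (if q j = (a:G) then (1:ℝ) else 0)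
          * ((3 * (mOf (cnt q) (q j) : ℝ))⁻¹ * (6 * Nt ⟨q j, hqmem j⟩ b))
          ≤ (if q j = (a:G) then (2:ℝ) else 0) := by
    intro a b j
    have hnt : (0:ℝ) ≤ Nt ⟨q j, hqmem j⟩ b := by positivity
    have hmjj := hmj j
    constructor
    · positivity
    · by_cases h : q j = (a:G)
      · rw [if_pos h, if_pos h, one_mul]
        have hle : Nt ⟨q j, hqmem j⟩ b ≤ (mOf (cnt q) (q j) : ℝ) := by
          show (cnt q (-(q j) - (b:G)) : ℝ) ≤ (mOf (cnt q) (q j) : ℝ)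
          exact_mod_cast cnt_le_mOf n q (q j) (b:G) b.2
        calc (3 * (mOf (cnt q) (q j) : ℝ))⁻¹ * (6 * Nt ⟨q j, hqmem j⟩ b)
            ≤ (3 * (mOf (cnt q) (q j) : ℝ))⁻¹ * (2 * (3 * (mOf (cnt q) (q j) : ℝ))) := by
              apply mul_le_mul_of_nonneg_left _ (inv_nonneg.mpr (by positivity))
              linarith
          _ = 2 := by field_simp
      · rw [if_neg h, if_neg h, zero_mul]
  have hPUbd : ∀ a b : σ, 0 ≤ (Pᵀ * U) a b ∧ (Pᵀ * U) a b ≤ 2 * n := by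
    intro a b
    rw [hPU]
    constructor
    · exact Finset.sum_nonneg fun j _ => (htermbd a b j).1
    · calc (∑ j, (if q j = (a:G) then (1:ℝ) else 0)
            * ((3 * (mOf (cnt q) (q j) : ℝ))⁻¹ * (6 * Nt ⟨q j, hqmem j⟩ b)))
          ≤ ∑ j, (if q j = (a:G) then (2:ℝ) else 0) :=
            Finset.sum_le_sum fun j _ => (htermbd a b j).2
        _ = 2 * (cnt q (a : G) : ℝ) := by
            rw [Finset.sum_congr rfl (fun j _ => by
              rw [show (if q j = (a:G) then (2:ℝ) else 0)
                  = 2 * (if q j = (a:G) then (1:ℝ) else 0) from by split <;> ring]),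
              ← Finset.mul_sum, cnt_sumR]
        _ ≤ 2 * n := by
            have := cnt_le n q (a : G)
            have : (cnt q (a:G) : ℝ) ≤ n := by exact_mod_cast this
            linarith
  have hWbd : ∀ a b : σ, |W a b| ≤ 3 * (n : ℝ) := by
    intro a b
    have hone : (1 : Matrix σ σ ℝ) a b ≤ 1 := by
      rw [Matrix.one_apply]; split <;> norm_num
    have hone0 : 0 ≤ (1 : Matrix σ σ ℝ) a b := by
      rw [Matrix.one_apply]; split <;> norm_num
    have hn1 : (1:ℝ) ≤ n := by exact_mod_cast hn
    have hWab : W a b = (1 : Matrix σ σ ℝ) a b + (Pᵀ * U) a b := by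
      rw [hW, Matrix.add_apply]
    rw [abs_le]
    constructor
    · rw [hWab]; have := (hPUbd a b).1; linarith [mul_nonneg (by norm_num : (0:ℝ) ≤ 3) (le_trans zero_le_one hn1)]
    · rw [hWab]; have := (hPUbd a b).2; linarith
  have hdetW : |W.det| ≤ (Fintype.card σ).factorial • ((3:ℝ) * n) ^ (Fintype.card σ) := by
    have h := Matrix.det_le (A := W) (abv := (AbsoluteValue.abs : AbsoluteValue ℝ ℝ))
      (x := 3 * (n:ℝ)) (fun i j => by simpa using hWbd i j)
    simpa using h
  have hkK : Fintype.card σ ≤ Fintype.card G := Fintype.card_subtype_le _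
  have hkn : Fintype.card σ ≤ n := by
    have h1 : Fintype.card σ = (Finset.univ.filter (fun a : G => 0 < cnt q a)).card :=
      Fintype.card_subtype _
    rw [h1]
    calc (Finset.univ.filter (fun a : G => 0 < cnt q a)).card
        ≤ ∑ a ∈ Finset.univ.filter (fun a : G => 0 < cnt q a), cnt q a := by
          rw [Finset.card_eq_sum_ones]
          exact Finset.sum_le_sum fun a ha => (Finset.mem_filter.mp ha).2
      _ ≤ ∑ a : G, cnt q a :=
          Finset.sum_le_sum_of_subset (Finset.filter_subset _ _)
      _ = n := sum_cnt n q
  have hfin : ((Fintype.card σ).factorial : ℝ) * ((3:ℝ) * n) ^ (Fintype.card σ)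
      ≤ 3 ^ Fintype.card G * (n : ℝ) ^ (2 * Fintype.card G) := by
    have hn1 : (1:ℝ) ≤ (n:ℝ) := by exact_mod_cast hn
    have h31 : (1:ℝ) ≤ 3 := by norm_num
    have hf1 : ((Fintype.card σ).factorial : ℝ) ≤ (n:ℝ) ^ (Fintype.card σ) := by
      calc ((Fintype.card σ).factorial : ℝ) ≤ ((Fintype.card σ) ^ (Fintype.card σ) : ℕ) := by
            exact_mod_cast Nat.factorial_le_pow _
        _ ≤ ((n ^ (Fintype.card σ) : ℕ) : ℝ) := by
            exact_mod_cast Nat.pow_le_pow_left hkn _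
        _ = (n:ℝ) ^ (Fintype.card σ) := by push_cast; ring
    calc ((Fintype.card σ).factorial : ℝ) * ((3:ℝ) * n) ^ (Fintype.card σ)
        ≤ (n:ℝ) ^ (Fintype.card σ) * ((3:ℝ) * n) ^ (Fintype.card σ) := by
          apply mul_le_mul_of_nonneg_right hf1 (by positivity)
      _ = 3 ^ (Fintype.card σ) * (n:ℝ) ^ (2 * Fintype.card σ) := by
          rw [mul_pow, two_mul, pow_add]; ring
      _ ≤ 3 ^ Fintype.card G * (n : ℝ) ^ (2 * Fintype.card G) := by
          apply mul_le_mul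
          · exact pow_le_pow_right₀ h31 hkK
          · exact pow_le_pow_right₀ hn1 (by omega)
          · positivity
          · positivity
  have hprodpos : (0:ℝ) ≤ ∏ j, (3 * (mOf (cnt q) (q j) : ℝ)) :=
    Finset.prod_nonneg fun j _ => by have := hmj j; positivity
  have hprodsplit : (∏ j, (3 * (mOf (cnt q) (q j) : ℝ)))
      = 3 ^ n * ∏ j, (mOf (cnt q) (q j) : ℝ) := by
    rw [Finset.prod_mul_distrib, Finset.prod_const]
    simp
  calc ((gram n q).det : ℝ)
      = (∏ j, (3 * (mOf (cnt q) (q j) : ℝ))) * W.det := hdet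
    _ ≤ (∏ j, (3 * (mOf (cnt q) (q j) : ℝ)))
        * (((Fintype.card σ).factorial : ℝ) * ((3:ℝ) * n) ^ (Fintype.card σ)) := by
        apply mul_le_mul_of_nonneg_left _ hprodpos
        refine le_trans (le_abs_self _) (le_trans hdetW ?_)
        rw [nsmul_eq_mul]
    _ ≤ (∏ j, (3 * (mOf (cnt q) (q j) : ℝ)))
        * (3 ^ Fintype.card G * (n : ℝ) ^ (2 * Fintype.card G)) :=
        mul_le_mul_of_nonneg_left hfin hprodpos
    _ = 3 ^ n * (∏ j, (mOf (cnt q) (q j) : ℝ))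
        * (3 ^ Fintype.card G * (n : ℝ) ^ (2 * Fintype.card G)) := by
        rw [hprodsplit]

lemma card_S (n : ℕ) (hn : 0 < n) (nbar : G → ℕ) (hsum : ∑ a : G, nbar a = n) :
    ((Sset n nbar).card : ℝ) * ∏ a : G, ((nbar a : ℝ) / n) ^ (nbar a) ≤ 1 := by
  classical
  set g : G → ℝ := fun a => (nbar a : ℝ) / n with hg
  have hNpos : (0:ℝ) < n := by exact_mod_cast hn
  have h1 : ∀ q ∈ Sset n nbar, (∏ j : Fin n, g (q j)) = ∏ a : G, g a ^ nbar a := by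
    intro q hq
    rw [prod_comp]
    exact Finset.prod_congr rfl fun a _ => by
      rw [(Finset.mem_filter.mp hq).2 a]
  calc ((Sset n nbar).card : ℝ) * ∏ a : G, g a ^ nbar a
      = ∑ q ∈ Sset n nbar, ∏ j : Fin n, g (q j) := by
        rw [Finset.sum_congr rfl h1, Finset.sum_const, nsmul_eq_mul]
    _ ≤ ∑ q : Fin n → G, ∏ j : Fin n, g (q j) :=
        Finset.sum_le_sum_of_subset_of_nonneg (Finset.subset_univ _)
          (fun q _ _ => Finset.prod_nonneg fun j _ => by positivity)
    _ = ∏ j : Fin n, ∑ a : G, g a := by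
        rw [Finset.prod_univ_sum, Fintype.piFinset_univ]
    _ = 1 := by
        have : ∑ a : G, g a = 1 := by
          rw [hg, ← Finset.sum_div]
          rw [show ∑ a : G, (nbar a : ℝ) = (n : ℝ) by exact_mod_cast congrArg Nat.cast hsum]
          exact div_self (ne_of_gt hNpos)
        rw [this, Finset.prod_const_one]

lemma exp_neg_klDiv (n : ℕ) (hn : 0 < n) (nbar : G → ℕ)
    (hm : ∀ a : G, 0 < nbar a → 0 < mOf nbar a) :
    Real.exp (-(n : ℝ) * klDiv (nuOf n nbar) (muOf n nbar))
      = ∏ a : G, ((mOf nbar a : ℝ) / ((n : ℝ) * (nbar a : ℝ))) ^ (nbar a) := by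
  have hNpos : (0:ℝ) < n := by exact_mod_cast hn
  rw [klDiv, Finset.mul_sum, Real.exp_sum]
  refine Finset.prod_congr rfl fun a _ => ?_
  by_cases ha : nbar a = 0
  · have hν : nuOf n nbar a = 0 := by simp [nuOf, ha]
    rw [if_pos hν, ha]
    simp
  · have hνpos : 0 < nuOf n nbar a := by
      have : (0:ℝ) < (nbar a : ℝ) := by exact_mod_cast Nat.pos_of_ne_zero ha
      exact div_pos this hNpos
    have hν : nuOf n nbar a ≠ 0 := ne_of_gt hνpos
    rw [if_neg hν]
    have hμpos : 0 < muOf n nbar a := by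
      have h1 : (0:ℝ) < (mOf nbar a : ℝ) := by
        exact_mod_cast hm a (Nat.pos_of_ne_zero ha)
      exact div_pos h1 (by positivity)
    have hr : muOf n nbar a / nuOf n nbar a
        = (mOf nbar a : ℝ) / ((n:ℝ) * (nbar a : ℝ)) := by
      have hb : (nbar a : ℝ) ≠ 0 := by exact_mod_cast ha
      simp only [muOf, nuOf]
      field_simp
    have hnν : -(n:ℝ) * (nuOf n nbar a * Real.log (nuOf n nbar a / muOf n nbar a))
        = (nbar a : ℝ) * Real.log (muOf n nbar a / nuOf n nbar a) := by
      rw [show nuOf n nbar a / muOf n nbar a = (muOf n nbar a / nuOf n nbar a)⁻¹ from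
        (inv_div _ _).symm, Real.log_inv]
      simp only [nuOf]
      field_simp
    rw [hnν, ← hr, ← Real.log_pow]
    exact Real.exp_log (pow_pos (div_pos hμpos hνpos) _)


end AuxProofs

end CLPaper

open CLPaper

/-- `E(n̄) ≤ 3^{|G|} n^{2|G|} exp(-n D(ν_{n̄}‖μ_{n̄}))` whenever `m_a > 0` for all
`a ∈ G₊`. -/
theorem Eval_le_exp (G : Type*) [AddCommGroup G] [Fintype G]
    (n : ℕ) (hn : 0 < n) (nbar : G → ℕ) (hsum : ∑ a : G, nbar a = n)
    (hm : ∀ a : G, 0 < nbar a → 0 < mOf nbar a) :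
    Eval n nbar ≤ (3 : ℝ) ^ (Fintype.card G) * (n : ℝ) ^ (2 * Fintype.card G) *
      Real.exp (-(n : ℝ) * klDiv (nuOf n nbar) (muOf n nbar)) := by
  classical
  have hNpos : (0:ℝ) < (n:ℝ) := by exact_mod_cast hn
  set K := Fintype.card G with hK
  set NN : ℝ := (n : ℝ) with hNN
  set Pm : ℝ := ∏ a : G, (mOf nbar a : ℝ) ^ nbar a with hPmdef
  set Pn : ℝ := ∏ a : G, (nbar a : ℝ) ^ nbar a with hPndef
  have hPm : (0:ℝ) < Pm := by
    rw [hPmdef]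
    refine Finset.prod_pos fun a _ => ?_
    rcases Nat.eq_zero_or_pos (nbar a) with h | h
    · rw [h]; norm_num
    · exact pow_pos (by exact_mod_cast hm a h) _
  have hPn : (0:ℝ) < Pn := by
    rw [hPndef]
    refine Finset.prod_pos fun a _ => ?_
    rcases Nat.eq_zero_or_pos (nbar a) with h | h
    · rw [h]; norm_num
    · exact pow_pos (by exact_mod_cast h) _
  -- termwise determinant bound
  have hdetq : ∀ q ∈ Sset n nbar, ((gram n q).det : ℝ)
      ≤ 3 ^ n * Pm * (3 ^ K * NN ^ (2 * K)) := by
    intro q hq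
    have hcq : ∀ a, cnt q a = nbar a := (Finset.mem_filter.mp hq).2
    have hcqf : cnt q = nbar := funext hcq
    have h1 := det_gram_le n hn q (by rw [hcqf]; exact hm)
    rw [hcqf] at h1
    have h2 : (∏ j, (mOf nbar (q j) : ℝ)) = Pm := by
      rw [prod_comp n q (fun a => (mOf nbar a : ℝ)), hPmdef]
      exact Finset.prod_congr rfl fun a _ => by rw [hcq a]
    rw [h2] at h1
    exact h1
  have hsumdet : (∑ q ∈ Sset n nbar, ((gram n q).det : ℝ))
      ≤ ((Sset n nbar).card : ℝ) * (3 ^ n * Pm * (3 ^ K * NN ^ (2 * K))) := by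
    calc (∑ q ∈ Sset n nbar, ((gram n q).det : ℝ))
        ≤ ∑ _q ∈ Sset n nbar, (3 ^ n * Pm * (3 ^ K * NN ^ (2 * K))) :=
          Finset.sum_le_sum hdetq
      _ = ((Sset n nbar).card : ℝ) * (3 ^ n * Pm * (3 ^ K * NN ^ (2 * K))) := by
          rw [Finset.sum_const, nsmul_eq_mul]
  -- multinomial bound
  have hCn : ((Sset n nbar).card : ℝ) * Pn ≤ NN ^ n := by
    have hC := card_S n hn nbar hsum
    have hsplit : (∏ a : G, ((nbar a : ℝ) / n) ^ (nbar a)) = Pn / NN ^ n := by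
      simp only [div_pow]
      rw [Finset.prod_div_distrib, hPndef, Finset.prod_pow_eq_pow_sum, hsum]
    rw [hsplit] at hC
    calc ((Sset n nbar).card : ℝ) * Pn
        = (((Sset n nbar).card : ℝ) * (Pn / NN ^ n)) * NN ^ n := by
          field_simp
      _ ≤ 1 * NN ^ n := by
          apply mul_le_mul_of_nonneg_right hC (by positivity)
      _ = NN ^ n := one_mul _
  -- exponential identity
  have hexp : Real.exp (-(n : ℝ) * klDiv (nuOf n nbar) (muOf n nbar))
      = Pm / (NN ^ n * Pn) := by
    rw [exp_neg_klDiv n hn nbar hm]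
    simp only [div_pow]
    rw [Finset.prod_div_distrib]
    congr 1
    simp only [mul_pow]
    rw [Finset.prod_mul_distrib, Finset.prod_pow_eq_pow_sum, hsum]
  rw [Eval, hexp, div_le_iff₀ (by positivity)]
  have hB : (3:ℝ) ^ K * NN ^ (2 * K) * (Pm / (NN ^ n * Pn)) * (3 ^ (n + 1) * NN ^ (2 * n))
      = (3 ^ K * NN ^ (2 * K) * Pm * 3 ^ (n + 1) * NN ^ (2 * n)) / (NN ^ n * Pn) := by
    ring
  rw [hB, le_div_iff₀ (by positivity)]
  have h3pow : (3:ℝ) ^ n ≤ 3 ^ (n + 1) := by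
    apply pow_le_pow_right₀ (by norm_num) (by omega)
  calc (∑ q ∈ Sset n nbar, ((gram n q).det : ℝ)) * (NN ^ n * Pn)
      ≤ (((Sset n nbar).card : ℝ) * (3 ^ n * Pm * (3 ^ K * NN ^ (2 * K)))) * (NN ^ n * Pn) := by
        apply mul_le_mul_of_nonneg_right hsumdet (by positivity)
    _ = (((Sset n nbar).card : ℝ) * Pn) * (3 ^ n * Pm * 3 ^ K * NN ^ (2 * K) * NN ^ n) := by
        ring
    _ ≤ NN ^ n * (3 ^ n * Pm * 3 ^ K * NN ^ (2 * K) * NN ^ n) := by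
        apply mul_le_mul_of_nonneg_right hCn (by positivity)
    _ = (3:ℝ) ^ n * (NN ^ (2 * n) * Pm * 3 ^ K * NN ^ (2 * K)) := by
        ring
    _ ≤ (3:ℝ) ^ (n + 1) * (NN ^ (2 * n) * Pm * 3 ^ K * NN ^ (2 * K)) := by
        apply mul_le_mul_of_nonneg_right h3pow (by positivity)
    _ = 3 ^ K * NN ^ (2 * K) * Pm * 3 ^ (n + 1) * NN ^ (2 * n) := by
        ring
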